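/- arXiv:1007.4853 — 11 statements merged into one kernel-verified Lean document; each statement's English description precedes it below -/
import Mathlib

section
/- Let A : ℕ → ℝ be an arrival flow with A(t) → ∞ as t → ∞, and let γ : ℕ → ℝ be a minimum arrival curve for A. Then for all real numbers 0 ≤ x ≤ y, one has sup{t ∈ ℕ : A(t) ≤ y} − inf{t ∈ ℕ : A(t) ≥ x} ≤ sup{d ∈ ℕ : γ(d) ≤ y − x} (the left-hand side being an integer difference, possibly negative). -/
open Filter

/-- For an arrival flow `A` tending to infinity with minimum arrival
curve `γ`, for all reals `0 ≤ x ≤ y`, the left pseudo-inverse of `A` at `y` minus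
the right pseudo-inverse of `A` at `x` is at most `sup {d : γ d ≤ y - x}`
(the latter possibly infinite, hence stated in `EReal`). -/
theorem stmt_0 (A : ℕ → ℝ) (hmono : Monotone A) (hA0 : A 0 = 0)
    (htend : Tendsto A atTop atTop)
    (γ : ℕ → ℝ) (hγ : ∀ s t : ℕ, s ≤ t → γ (t - s) ≤ A t - A s)
    (x y : ℝ) (hx : 0 ≤ x) (hxy : x ≤ y) :
    (((((sSup {t : ℕ | A t ≤ y} : ℕ) : ℤ) - ((sInf {t : ℕ | x ≤ A t} : ℕ) : ℤ) : ℤ) : ℝ) : EReal) ≤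
      ⨆ d ∈ {d : ℕ | γ d ≤ y - x}, ((d : ℝ) : EReal) := by
  set T := sSup {t : ℕ | A t ≤ y} with hT
  set S := sInf {t : ℕ | x ≤ A t} with hS
  -- boundedness of the set for T
  obtain ⟨N, hN⟩ := (htend.eventually_gt_atTop y).exists
  have hbdd : BddAbove {t : ℕ | A t ≤ y} := by
    refine ⟨N, fun t ht => ?_⟩
    by_contra h
    push_neg at h
    exact absurd (hmono h.le) (not_le.2 (lt_of_le_of_lt ht (lt_of_lt_of_le hN (le_of_eq rfl))))
  have hTne : Set.Nonempty {t : ℕ | A t ≤ y} := ⟨0, by simp [hA0]; linarith⟩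
  have hTmem : T ∈ {t : ℕ | A t ≤ y} := Nat.sSup_mem hTne hbdd
  have hSne : Set.Nonempty {t : ℕ | x ≤ A t} := by
    obtain ⟨M, hM⟩ := (htend.eventually_ge_atTop x).exists
    exact ⟨M, hM⟩
  have hSmem : S ∈ {t : ℕ | x ≤ A t} := Nat.sInf_mem hSne
  have key : ∀ d ∈ {d : ℕ | γ d ≤ y - x},
      ((d : ℝ) : EReal) ≤ ⨆ d ∈ {d : ℕ | γ d ≤ y - x}, ((d : ℝ) : EReal) := by
    intro d hd
    exact le_iSup₂ (f := fun (d : ℕ) (_ : d ∈ {d : ℕ | γ d ≤ y - x}) => ((d : ℝ) : EReal)) d hd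
  by_cases hle : S ≤ T
  · have hd : (T - S : ℕ) ∈ {d : ℕ | γ d ≤ y - x} := by
      have := hγ S T hle
      have hAT : A T ≤ y := hTmem
      have hAS : x ≤ A S := hSmem
      simp only [Set.mem_setOf_eq]
      linarith
    have := key _ hd
    refine le_trans (le_of_eq ?_) this
    have : ((T - S : ℕ) : ℝ) = ((T : ℤ) - (S : ℤ) : ℤ) := by
      push_cast [Nat.cast_sub hle]
      ring
    exact congrArg _ this.symm
  · push_neg at hle
    have h0 : (0 : ℕ) ∈ {d : ℕ | γ d ≤ y - x} := by
      have := hγ 0 0 le_rfl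
      simp only [Set.mem_setOf_eq]
      simp at this
      linarith
    refine le_trans ?_ (key 0 h0)
    have : ((T : ℤ) - (S : ℤ) : ℤ) ≤ 0 := by omega
    exact_mod_cast EReal.coe_le_coe_iff.2 (by exact_mod_cast this : ((((T:ℤ)-(S:ℤ):ℤ)):ℝ) ≤ 0)
end

section
/- Let A : ℕ → ℝ be an arrival flow with A(t) → ∞ as t → ∞, and let Γ : ℕ → ℝ be a maximum arrival curve for A. Then for all real numbers 0 ≤ x < y, one has inf{t ∈ ℕ : A(t) ≥ y} − sup{t ∈ ℕ : A(t) ≤ x} ≥ inf{d ∈ ℕ : Γ(d) ≥ y − x}. -/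
open Filter

/-- For an arrival flow `A` tending to infinity with maximum arrival
curve `Γ`, for all reals `0 ≤ x < y`, the right pseudo-inverse of `A` at `y` minus
the left pseudo-inverse of `A` at `x` is at least `inf {d : Γ d ≥ y - x}`. -/
theorem stmt_1 (A : ℕ → ℝ) (hmono : Monotone A) (hA0 : A 0 = 0)
    (htend : Tendsto A atTop atTop)
    (Γ : ℕ → ℝ) (hΓ : ∀ s t : ℕ, s ≤ t → A t - A s ≤ Γ (t - s))
    (x y : ℝ) (hx : 0 ≤ x) (hxy : x < y) :
    ((sInf {d : ℕ | y - x ≤ Γ d} : ℕ) : ℤ) ≤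
      ((sInf {t : ℕ | y ≤ A t} : ℕ) : ℤ) - ((sSup {t : ℕ | A t ≤ x} : ℕ) : ℤ) := by
  set T := sInf {t : ℕ | y ≤ A t} with hT
  set S := sSup {t : ℕ | A t ≤ x} with hS
  -- nonempty and bddAbove facts
  obtain ⟨t₀, ht₀⟩ : ∃ t, y ≤ A t := by
    rcases (tendsto_atTop.mp htend y).exists with ⟨t, ht⟩
    exact ⟨t, ht⟩
  have hTne : {t : ℕ | y ≤ A t}.Nonempty := ⟨t₀, ht₀⟩
  have hAT : y ≤ A T := Nat.sInf_mem hTne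
  have hSne : {t : ℕ | A t ≤ x}.Nonempty := ⟨0, by simpa [hA0] using hx⟩
  have hSbdd : BddAbove {t : ℕ | A t ≤ x} := by
    refine ⟨t₀, fun s hs => ?_⟩
    by_contra h
    push_neg at h
    have := hmono h.le
    have : y ≤ x := le_trans ht₀ (le_trans this hs)
    linarith
  have hAS : A S ≤ x := Nat.sSup_mem hSne hSbdd
  have hST : S ≤ T := by
    by_contra h
    push_neg at h
    have := hmono h.le
    have : y ≤ x := le_trans hAT (le_trans this hAS)
    linarith
  have hmem : T - S ∈ {d : ℕ | y - x ≤ Γ d} := by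
    have : A T - A S ≤ Γ (T - S) := hΓ S T hST
    have : y - x ≤ Γ (T - S) := by linarith
    exact this
  have h1 : sInf {d : ℕ | y - x ≤ Γ d} ≤ T - S := Nat.sInf_le hmem
  have := (Nat.cast_le (α := ℤ)).mpr h1
  rwa [Nat.cast_sub hST] at this
end

section
/- (Packetization.) Let A, Ā : ℕ → ℝ be nondecreasing functions with Ā ≤ A pointwise, let ω : ℕ → ℝ be nondecreasing with ω(0) = 0, and suppose ω is a minimum service curve, i.e. Ā(t) ≥ min_{0 ≤ s ≤ t} (A(s) + ω(t − s)) for all t. Let Q : ℝ → ℝ be nondecreasing with Q(x) ≤ x and x − Q(x) ≤ l for all x, where l ≥ 0. Then for all t, Q(Ā(t)) ≥ min_{0 ≤ s ≤ t} ( Q(A(s)) + max(ω(t − s) − l, 0) ); that is, t ↦ (ω(t) − l)⁺ is a minimum service curve for the packetized flow Q ∘ A with output Q ∘ Ā. -/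
/-- min-plus convolution over ℕ: `(f * g)(t) = min_{0 ≤ s ≤ t} (f s + g (t - s))`. -/
noncomputable def minConv (f g : ℕ → ℝ) (t : ℕ) : ℝ :=
  (Finset.Iic t).inf' Finset.nonempty_Iic (fun s => f s + g (t - s))

/-- Packetization: if `ω` is a minimum service curve for input `A`
with output `Ā`, and `Q` is a packetizer with maximum packet length `l`, then
`t ↦ (ω t - l)⁺` is a minimum service curve for the packetized flow `Q ∘ A` with
output `Q ∘ Ā`. -/
theorem stmt_2 (A Abar : ℕ → ℝ) (hA : Monotone A) (hAbar : Monotone Abar)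
    (hle : ∀ t, Abar t ≤ A t)
    (ω : ℕ → ℝ) (hω : Monotone ω) (hω0 : ω 0 = 0)
    (hserv : ∀ t, minConv A ω t ≤ Abar t)
    (Q : ℝ → ℝ) (hQ : Monotone Q) (l : ℝ) (hl : 0 ≤ l)
    (hQ1 : ∀ x : ℝ, Q x ≤ x) (hQ2 : ∀ x : ℝ, x - Q x ≤ l) :
    ∀ t, minConv (fun s => Q (A s)) (fun d => max (ω d - l) 0) t ≤ Q (Abar t) := by
  intro t
  obtain ⟨s, hs, heq⟩ := Finset.exists_mem_eq_inf' (Finset.nonempty_Iic (a := t))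
    (fun s => A s + ω (t - s))
  have hkey : A s + ω (t - s) ≤ Abar t := by
    have := hserv t
    rw [minConv, heq] at this
    exact this
  have hωnn : 0 ≤ ω (t - s) := hω0 ▸ hω (Nat.zero_le _)
  have hterm : Q (A s) + max (ω (t - s) - l) 0 ≤ Q (Abar t) := by
    rcases le_total (ω (t - s)) l with h | h
    · rw [max_eq_right (by linarith), add_zero]
      exact hQ (by linarith)
    · rw [max_eq_left (by linarith)]
      have h1 := hQ1 (A s)
      have h2 := hQ2 (Abar t)
      linarith
  calc minConv (fun s => Q (A s)) (fun d => max (ω d - l) 0) t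
      ≤ Q (A s) + max (ω (t - s) - l) 0 := Finset.inf'_le _ hs
    _ ≤ Q (Abar t) := hterm
end

section
/- Let L : ℕ → ℝ be a sequence of packet lengths with L(j) > 0 for all j and Σ_j L(j) = ∞, let 𝒫 : ℝ≥0 → ℕ be the induced packet operator 𝒫(x) = max{n : Σ_{j=1}^n L(j) ≤ x}, and let 𝒫⁻(n) = Σ_{j=1}^n L(j) be its data operator. If Π : ℝ≥0 → ℝ is a maximum packet curve for 𝒫, then for all naturals p ≤ q: 𝒫⁻(q) − 𝒫⁻(p) ≥ inf{d ≥ 0 : Π(d) ≥ q − p}. -/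
open Filter

/-- Cumulative length of the first `n` packets: `𝒫⁻(n) = Σ_{j=1}^n L j`. -/
noncomputable def cumLen (L : ℕ → ℝ) (n : ℕ) : ℝ := ∑ j ∈ Finset.range n, L j

/-- The packet operator `𝒫(x) = max {n : Σ_{j=1}^n L j ≤ x}`. -/
noncomputable def packOp (L : ℕ → ℝ) (x : ℝ) : ℕ := sSup {n : ℕ | cumLen L n ≤ x}

lemma cumLen_strictMono (L : ℕ → ℝ) (hL : ∀ j, 0 < L j) : StrictMono (cumLen L) := by
  apply strictMono_nat_of_lt_succ
  intro n
  simp [cumLen, Finset.sum_range_succ]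
  exact hL n

lemma packOp_cumLen (L : ℕ → ℝ) (hL : ∀ j, 0 < L j) (n : ℕ) :
    packOp L (cumLen L n) = n := by
  have hs : {m : ℕ | cumLen L m ≤ cumLen L n} = Set.Iic n := by
    ext m
    simp [Set.mem_Iic, (cumLen_strictMono L hL).le_iff_le]
  rw [packOp, hs, csSup_Iic]

/-- if `Π` is a maximum packet curve for the packet operator induced by
positive packet lengths with divergent sum, then for naturals `p ≤ q`,
`𝒫⁻(q) - 𝒫⁻(p) ≥ inf {d ≥ 0 : Π d ≥ q - p}`. -/
theorem stmt_3 (L : ℕ → ℝ) (hL : ∀ j, 0 < L j)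
    (hdiv : Tendsto (cumLen L) atTop atTop)
    (Pmax : ℝ → ℝ)
    (hPmax : ∀ x y : ℝ, 0 ≤ x → x ≤ y →
      ((packOp L y : ℝ) - (packOp L x : ℝ)) ≤ Pmax (y - x)) :
    ∀ p q : ℕ, p ≤ q →
      sInf {d : ℝ | 0 ≤ d ∧ ((q : ℝ) - (p : ℝ)) ≤ Pmax d} ≤ cumLen L q - cumLen L p := by
  intro p q hpq
  have hmono := (cumLen_strictMono L hL).monotone
  have hp0 : 0 ≤ cumLen L p := by
    have := hmono (Nat.zero_le p)
    simpa [cumLen] using this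
  have hxy : cumLen L p ≤ cumLen L q := hmono hpq
  have key : ((q : ℝ) - (p : ℝ)) ≤ Pmax (cumLen L q - cumLen L p) := by
    have := hPmax (cumLen L p) (cumLen L q) hp0 hxy
    rwa [packOp_cumLen L hL, packOp_cumLen L hL] at this
  have hmem : cumLen L q - cumLen L p ∈ {d : ℝ | 0 ≤ d ∧ ((q : ℝ) - (p : ℝ)) ≤ Pmax d} :=
    ⟨by linarith, key⟩
  exact csInf_le ⟨0, fun d hd => hd.1⟩ hmem
end

section
/- Let L : ℕ → ℝ be a sequence of packet lengths with L(j) > 0 for all j and Σ_j L(j) = ∞, let 𝒫 : ℝ≥0 → ℕ be the induced packet operator 𝒫(x) = max{n : Σ_{j=1}^n L(j) ≤ x}, and let 𝒫⁻(n) = Σ_{j=1}^n L(j) be its data operator. If π : ℝ≥0 → ℝ is a minimum packet curve for 𝒫 with π(d) → ∞ as d → ∞, then for all naturals p ≤ q: 𝒫⁻(q) − 𝒫⁻(p) ≤ sup{d ≥ 0 : π(d) ≤ q − p}. -/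
open Filter

/-- if `π` is a minimum packet curve, tending to infinity, for the packet
operator induced by positive packet lengths with divergent sum, then for naturals
`p ≤ q`, `𝒫⁻(q) - 𝒫⁻(p) ≤ sup {d ≥ 0 : π d ≤ q - p}`. -/
theorem stmt_4 (L : ℕ → ℝ) (hL : ∀ j, 0 < L j)
    (hdiv : Tendsto (cumLen L) atTop atTop)
    (pimin : ℝ → ℝ)
    (hpimin : ∀ x y : ℝ, 0 ≤ x → x ≤ y →
      pimin (y - x) ≤ ((packOp L y : ℝ) - (packOp L x : ℝ)))
    (hpitend : Tendsto pimin atTop atTop) :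
    ∀ p q : ℕ, p ≤ q →
      cumLen L q - cumLen L p ≤ sSup {d : ℝ | 0 ≤ d ∧ pimin d ≤ ((q : ℝ) - (p : ℝ))} := by
  intro p q hpq
  have hmono : StrictMono (cumLen L) := by
    apply strictMono_nat_of_lt_succ
    intro n
    simp [cumLen, Finset.sum_range_succ, hL n]
  have hpack : ∀ n, packOp L (cumLen L n) = n := by
    intro n
    have hset : {m : ℕ | cumLen L m ≤ cumLen L n} = Set.Iic n := by
      ext m
      simp [hmono.le_iff_le]
    rw [packOp, hset, csSup_Iic]
  have h0 : (0:ℝ) ≤ cumLen L p := by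
    have := hmono.monotone (Nat.zero_le p)
    simpa [cumLen] using this
  have hle : cumLen L p ≤ cumLen L q := hmono.monotone hpq
  have hmem : cumLen L q - cumLen L p ∈
      {d : ℝ | 0 ≤ d ∧ pimin d ≤ ((q : ℝ) - (p : ℝ))} := by
    refine ⟨by linarith, ?_⟩
    have := hpimin (cumLen L p) (cumLen L q) h0 hle
    rwa [hpack, hpack] at this
  have hbdd : BddAbove {d : ℝ | 0 ≤ d ∧ pimin d ≤ ((q : ℝ) - (p : ℝ))} := by
    obtain ⟨M, hM⟩ := (tendsto_atTop.mp hpitend ((q : ℝ) - (p : ℝ) + 1)).exists_forall_of_atTop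
    refine ⟨M, fun d hd => ?_⟩
    by_contra h
    push_neg at h
    have := hM d h.le
    linarith [hd.2]
  exact le_csSup hbdd hmem
end

section
/- Let A : ℕ → ℝ≥0 be an arrival flow with minimum arrival curve γ : ℕ → ℝ≥0, let 𝒫 : ℝ≥0 → ℕ be nondecreasing, and let π : ℝ≥0 → ℝ be a nondecreasing minimum packet curve for 𝒫. Then π ∘ γ is a minimum arrival curve for the packet flow P = 𝒫 ∘ A, i.e. 𝒫(A(t)) − 𝒫(A(s)) ≥ π(γ(t − s)) for all naturals s ≤ t. -/
open scoped NNReal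

/-- if `γ` is a minimum arrival curve for the arrival flow `A` and `π` is a
nondecreasing minimum packet curve for the nondecreasing packet operator `𝒫`, then
`π ∘ γ` is a minimum arrival curve for the packet flow `𝒫 ∘ A`. -/
theorem stmt_6 (A : ℕ → ℝ≥0) (hA : Monotone A) (hA0 : A 0 = 0)
    (γ : ℕ → ℝ≥0) (hγ : ∀ s t : ℕ, s ≤ t → γ (t - s) ≤ A t - A s)
    (P : ℝ≥0 → ℕ) (hP : Monotone P)
    (pimin : ℝ≥0 → ℝ) (hpiMono : Monotone pimin)
    (hpi : ∀ x y : ℝ≥0, x ≤ y → pimin (y - x) ≤ ((P y : ℝ) - (P x : ℝ))) :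
    ∀ s t : ℕ, s ≤ t → pimin (γ (t - s)) ≤ ((P (A t) : ℝ) - (P (A s) : ℝ)) := by
  intro s t hst
  exact le_trans (hpiMono (hγ s t hst)) (hpi (A s) (A t) (hA hst))
end

section
/- Let A, Ā : ℕ → ℝ≥0 be nondecreasing with Ā ≤ A pointwise, and let ω : ℕ → ℝ≥0 be a strict service curve for A: for all naturals s ≤ t such that Ā(u) < A(u) for every u with s < u ≤ t, one has Ā(t) − Ā(s) ≥ ω(t − s). Let 𝒫̄ : ℝ≥0 → ℝ and let κ : ℝ≥0 → ℝ be nondecreasing with 𝒫̄(y) − 𝒫̄(x) ≥ κ(y − x) for all 0 ≤ x ≤ y. Then κ ∘ ω is a strict service curve for the packet flow: for all s ≤ t with Ā(u) < A(u) for every u in (s, t], one has 𝒫̄(Ā(t)) − 𝒫̄(Ā(s)) ≥ κ(ω(t − s)). -/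
/-- if `ω` is a strict service curve for the data flow `A` with output `Ā`,
and `κ` is a nondecreasing minimum packet curve for the output packet operator `𝒫̄`,
then `κ ∘ ω` is a strict service curve for the output packet flow `𝒫̄ ∘ Ā`. -/
theorem stmt_11 (A Abar : ℕ → ℝ) (hA : Monotone A) (hAbar : Monotone Abar)
    (hApos : ∀ t, 0 ≤ A t) (hAbarpos : ∀ t, 0 ≤ Abar t)
    (hle : ∀ t, Abar t ≤ A t)
    (ω : ℕ → ℝ) (hωpos : ∀ d, 0 ≤ ω d)
    (hstrict : ∀ s t : ℕ, s ≤ t → (∀ u, s < u → u ≤ t → Abar u < A u) →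
      ω (t - s) ≤ Abar t - Abar s)
    (Pbar : ℝ → ℝ) (κ : ℝ → ℝ) (hκ : Monotone κ)
    (hκcurve : ∀ x y : ℝ, 0 ≤ x → x ≤ y → κ (y - x) ≤ Pbar y - Pbar x) :
    ∀ s t : ℕ, s ≤ t → (∀ u, s < u → u ≤ t → Abar u < A u) →
      κ (ω (t - s)) ≤ Pbar (Abar t) - Pbar (Abar s) := by
  intro s t hst hback
  have h1 := hstrict s t hst hback
  calc κ (ω (t - s)) ≤ κ (Abar t - Abar s) := hκ h1
    _ ≤ Pbar (Abar t) - Pbar (Abar s) :=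
      hκcurve (Abar s) (Abar t) (hAbarpos s) (hAbar hst)
end

section
/- Let L : ℕ → ℝ be packet lengths with L(j) > 0 and Σ_j L(j) = ∞, inducing packet operator 𝒫(x) = max{n : Σ_{j=1}^n L(j) ≤ x} and data operator 𝒫⁻(n) = Σ_{j=1}^n L(j). Let Π : ℝ≥0 → ℝ be a maximum packet curve for 𝒫, and define Π⁻(r) = inf{d ≥ 0 : Π(d) ≥ r}. Let P, P̄ : ℕ → ℕ be nondecreasing packet flows with P̄ ≤ P, and suppose ω' : ℕ → ℝ≥0 is a minimum service curve for P, i.e. for every t, P̄(t) ≥ min_{0 ≤ s ≤ t}( P(s) + ω'(t − s) ). Define the data flows A(s) = 𝒫⁻(P(s)) and Ā(t) = 𝒫⁻(P̄(t)). Then for every t, Ā(t) ≥ min_{0 ≤ s ≤ t}( A(s) + Π⁻(ω'(t − s)) ); i.e., Π⁻ ∘ ω' is a minimum service curve for the data flow A. -/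
open Filter

/-- if `Π` is a maximum packet curve for the packet operator `𝒫`, with
pseudo-inverse `Π⁻(r) = inf {d ≥ 0 : Π d ≥ r}`, and `ω'` is a minimum service curve
for the packet flow `P` with output `P̄`, then `Π⁻ ∘ ω'` is a minimum service curve
for the data flow `A = 𝒫⁻ ∘ P` with output `Ā = 𝒫⁻ ∘ P̄`. -/
theorem stmt_12 (L : ℕ → ℝ) (hL : ∀ j, 0 < L j)
    (hdiv : Tendsto (cumLen L) atTop atTop)
    (Pmax : ℝ → ℝ)
    (hPmax : ∀ x y : ℝ, 0 ≤ x → x ≤ y →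
      ((packOp L y : ℝ) - (packOp L x : ℝ)) ≤ Pmax (y - x))
    (P Pbar : ℕ → ℕ) (hP : Monotone P) (hPbar : Monotone Pbar)
    (hle : ∀ t, Pbar t ≤ P t)
    (ω' : ℕ → ℝ) (hω'pos : ∀ d, 0 ≤ ω' d)
    (hserv : ∀ t, (Finset.Iic t).inf' Finset.nonempty_Iic
        (fun s => (P s : ℝ) + ω' (t - s)) ≤ (Pbar t : ℝ)) :
    ∀ t, (Finset.Iic t).inf' Finset.nonempty_Iic
        (fun s => cumLen L (P s) + sInf {d : ℝ | 0 ≤ d ∧ ω' (t - s) ≤ Pmax d})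
      ≤ cumLen L (Pbar t) := by
  intro t
  obtain ⟨s, hs, hval⟩ := Finset.exists_mem_eq_inf' (Finset.nonempty_Iic (a := t))
    (fun s => (P s : ℝ) + ω' (t - s))
  have hkey : (P s : ℝ) + ω' (t - s) ≤ (Pbar t : ℝ) := by
    have h := hserv t; rw [hval] at h; exact h
  have hmono : StrictMono (cumLen L) := strictMono_nat_of_lt_succ (fun n => by
    simp only [cumLen, Finset.sum_range_succ]
    linarith [hL n])
  have hpack : ∀ m, packOp L (cumLen L m) = m := by
    intro m
    have h : {n : ℕ | cumLen L n ≤ cumLen L m} = Set.Iic m := by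
      ext n; simp [hmono.le_iff_le]
    simp [packOp, h, csSup_Iic]
  have hPsle : P s ≤ Pbar t := by
    have h : (P s : ℝ) ≤ Pbar t := le_trans (le_add_of_nonneg_right (hω'pos _)) hkey
    exact_mod_cast h
  set d : ℝ := cumLen L (Pbar t) - cumLen L (P s) with hd
  have hd0 : 0 ≤ d := sub_nonneg.2 (hmono.monotone hPsle)
  have hx0 : 0 ≤ cumLen L (P s) := Finset.sum_nonneg (fun j _ => (hL j).le)
  have hPi : ω' (t - s) ≤ Pmax d := by
    have h2 := hPmax (cumLen L (P s)) (cumLen L (Pbar t)) hx0 (hmono.monotone hPsle)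
    rw [hpack, hpack] at h2
    have h3 : ω' (t - s) ≤ (Pbar t : ℝ) - (P s : ℝ) := by linarith
    exact h3.trans h2
  have hmem : d ∈ {d : ℝ | 0 ≤ d ∧ ω' (t - s) ≤ Pmax d} := ⟨hd0, hPi⟩
  have hbdd : BddBelow {d : ℝ | 0 ≤ d ∧ ω' (t - s) ≤ Pmax d} := ⟨0, fun x hx => hx.1⟩
  have hinf := csInf_le hbdd hmem
  calc (Finset.Iic t).inf' Finset.nonempty_Iic
        (fun s => cumLen L (P s) + sInf {d : ℝ | 0 ≤ d ∧ ω' (t - s) ≤ Pmax d})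
      ≤ cumLen L (P s) + sInf {d : ℝ | 0 ≤ d ∧ ω' (t - s) ≤ Pmax d} :=
        Finset.inf'_le _ hs
    _ ≤ cumLen L (P s) + d := by linarith
    _ = cumLen L (Pbar t) := by rw [hd]; ring
end

section
/- (Window flow control, small window.) Let R, T, z be positive reals with z ≤ RT. Then for every real t ≥ 0, inf over integers n ≥ 1 of ( n·z + R·(t − n·T)⁺ ) is at least (z/T)·t. Consequently, the sub-additive closure of the function t ↦ z + R(t − T)⁺ (which equals the min-plus convolution I_z * ω for ω(t) = R(t − T)⁺) is bounded below by the rate-(z/T) line. -/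
/-- Window flow control, small window: for `0 < z ≤ RT`, the infimum
over integers `n ≥ 1` of `n·z + R·(t − n·T)⁺` is at least `(z/T)·t`; hence the
sub-additive closure of `t ↦ z + R(t − T)⁺` is bounded below by the rate-`z/T` line. -/
theorem stmt_16 (R T z : ℝ) (hR : 0 < R) (hT : 0 < T) (hz : 0 < z) (hzRT : z ≤ R * T) :
    ∀ t : ℝ, 0 ≤ t →
      (z / T) * t ≤
        sInf {v : ℝ | ∃ n : ℕ, 1 ≤ n ∧ v = (n : ℝ) * z + R * max (t - (n : ℝ) * T) 0} := by
  intro t ht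
  apply le_csInf
  · exact ⟨1 * z + R * max (t - 1 * T) 0, 1, le_refl 1, by push_cast; ring⟩
  · rintro v ⟨n, hn, rfl⟩
    have hzT : z / T ≤ R := (div_le_iff₀ hT).2 hzRT
    rcases le_or_gt t ((n : ℝ) * T) with h | h
    · have : max (t - (n : ℝ) * T) 0 = 0 := max_eq_right (by linarith)
      rw [this, mul_zero, add_zero]
      have : (z / T) * t ≤ (z / T) * ((n : ℝ) * T) :=
        mul_le_mul_of_nonneg_left h (le_of_lt (div_pos hz hT))
      calc (z / T) * t ≤ (z / T) * ((n : ℝ) * T) := this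
        _ = (n : ℝ) * z := by field_simp
    · have hm : max (t - (n : ℝ) * T) 0 = t - (n : ℝ) * T := max_eq_left (by linarith)
      rw [hm]
      have h1 : (z / T) * (t - (n : ℝ) * T) ≤ R * (t - (n : ℝ) * T) :=
        mul_le_mul_of_nonneg_right hzT (by linarith)
      have h2 : (z / T) * ((n : ℝ) * T) = (n : ℝ) * z := by field_simp
      nlinarith
end

section
/- (Window flow control, large window.) Let R, T, z be positive reals with z ≥ RT. Then for every real t ≥ 0, the infimum over integers n ≥ 0 of ( n·z + R·(t − (n+1)·T)⁺ ) equals R·(t − T)⁺; i.e., a window of size z ≥ RT does not degrade the (R,T) service curve: ω * (I_z * ω)* = ω for ω(t) = R(t − T)⁺. -/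
/-- Window flow control, large window: for `z ≥ RT > 0`, the infimum
over integers `n ≥ 0` of `n·z + R·(t − (n+1)·T)⁺` equals `R·(t − T)⁺`; i.e. a window
of size `z ≥ RT` does not degrade the `(R,T)` service curve: `ω * (I_z * ω)* = ω`. -/
theorem stmt_17 (R T z : ℝ) (hR : 0 < R) (hT : 0 < T) (hz : 0 < z) (hzRT : R * T ≤ z) :
    ∀ t : ℝ, 0 ≤ t →
      sInf {v : ℝ | ∃ n : ℕ, v = (n : ℝ) * z + R * max (t - ((n : ℝ) + 1) * T) 0}
        = R * max (t - T) 0 := by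
  intro t ht
  have hlb : ∀ v ∈ {v : ℝ | ∃ n : ℕ, v = (n : ℝ) * z + R * max (t - ((n : ℝ) + 1) * T) 0},
      R * max (t - T) 0 ≤ v := by
    rintro v ⟨n, rfl⟩
    have h1 : (n : ℝ) * (R * T) ≤ (n : ℝ) * z :=
      mul_le_mul_of_nonneg_left hzRT (Nat.cast_nonneg n)
    have h2 : max (t - T) 0 ≤ max (t - ((n : ℝ) + 1) * T) 0 + (n : ℝ) * T := by
      have hn : 0 ≤ (n : ℝ) * T := mul_nonneg (Nat.cast_nonneg n) hT.le
      rcases le_max_iff.mpr (Or.inr (le_refl (0:ℝ))) with _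
      apply max_le
      · have : t - T ≤ (t - ((n : ℝ) + 1) * T) + (n : ℝ) * T := by ring_nf; nlinarith
        exact this.trans (add_le_add (le_max_left _ _) le_rfl)
      · exact le_add_of_nonneg_of_le hn (le_refl 0) |>.trans
          (by linarith [le_max_right (t - ((n : ℝ) + 1) * T) (0:ℝ)])
    nlinarith [mul_le_mul_of_nonneg_left h2 hR.le]
  apply le_antisymm
  · exact csInf_le ⟨_, hlb⟩ ⟨0, by norm_num⟩
  · exact le_csInf ⟨_, ⟨0, rfl⟩⟩ hlb
end

section
/- Let A : ℕ → ℝ be an arrival flow that admits at least one maximum arrival curve, and define Γ_A(d) = sup_{s ≥ 0}( A(s + d) − A(s) ) (the min-plus deconvolution A ⊘ A). Then: (i) Γ_A is a maximum arrival curve for A; (ii) Γ_A ≤ Γ pointwise for every maximum arrival curve Γ of A (so Γ_A is the best, i.e. smallest, maximum arrival curve); and (iii) Γ_A is sub-additive: Γ_A(d + e) ≤ Γ_A(d) + Γ_A(e) for all d, e ∈ ℕ. -/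
/-- for an arrival flow `A` admitting some maximum arrival curve, the
min-plus deconvolution `Γ_A(d) = sup_s (A(s+d) − A(s))` (i) is a maximum arrival curve
for `A`, (ii) is pointwise minimal among maximum arrival curves of `A`, and (iii) is
sub-additive. -/
theorem stmt_19 (A : ℕ → ℝ) (hA : Monotone A) (hA0 : A 0 = 0)
    (Γ0 : ℕ → ℝ) (hΓ0 : ∀ s t : ℕ, s ≤ t → A t - A s ≤ Γ0 (t - s)) :
    (∀ s t : ℕ, s ≤ t → A t - A s ≤ ⨆ u : ℕ, (A (u + (t - s)) - A u)) ∧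
    (∀ Γ : ℕ → ℝ, (∀ s t : ℕ, s ≤ t → A t - A s ≤ Γ (t - s)) →
      ∀ d : ℕ, (⨆ u : ℕ, (A (u + d) - A u)) ≤ Γ d) ∧
    (∀ d e : ℕ, (⨆ u : ℕ, (A (u + (d + e)) - A u)) ≤
      (⨆ u : ℕ, (A (u + d) - A u)) + (⨆ u : ℕ, (A (u + e) - A u))) := by
  have hbdd : ∀ d : ℕ, BddAbove (Set.range fun u : ℕ => A (u + d) - A u) := by
    intro d
    refine ⟨Γ0 d, ?_⟩
    rintro x ⟨u, rfl⟩
    simpa using hΓ0 u (u + d) (Nat.le_add_right _ _)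
  have hle : ∀ d u : ℕ, A (u + d) - A u ≤ ⨆ v : ℕ, (A (v + d) - A v) :=
    fun d u => le_ciSup (hbdd d) u
  refine ⟨?_, ?_, ?_⟩
  · intro s t hst
    have := hle (t - s) s
    rwa [Nat.add_sub_cancel' hst] at this
  · intro Γ hΓ d
    refine ciSup_le fun u => ?_
    simpa using hΓ u (u + d) (Nat.le_add_right _ _)
  · intro d e
    refine ciSup_le fun u => ?_
    have h1 : A (u + (d + e)) - A (u + d) ≤ ⨆ v : ℕ, (A (v + e) - A v) := by
      have := hle e (u + d)
      rwa [add_assoc] at this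
    have h2 : A (u + d) - A u ≤ ⨆ v : ℕ, (A (v + d) - A v) := hle d u
    linarith
end
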